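/- Let H and V be finite-dimensional complex inner product spaces, A : H → V a linear map, τ ∈ V nonzero, and w₀ := A⁺τ, assumed to have norm 1. Let T := ker A ⊕ span{w₀}, and let K ⊆ H be a subspace such that there exists h ∈ K with A h = τ. Then ‖P_{T ∩ K} w₀‖² = 1 / w₊, where w₊ := min{ ‖h‖² : h ∈ K, A h = τ } is the positive witness size and P_{T ∩ K} is the orthogonal projection onto T ∩ K. -/

import Mathlib

open scoped InnerProductSpace

open LinearMap

/-- The orthogonal projection onto a submodule, as an endomorphism of the ambient space. -/
noncomputable def projL {H : Type*} [NormedAddCommGroup H] [InnerProductSpace ℂ H]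
    (K : Submodule ℂ H) [K.HasOrthogonalProjection] : H →ₗ[ℂ] H :=
  K.subtype ∘ₗ (K.orthogonalProjectionOnto).toLinearMap

/-- The four Moore–Penrose equations: `B` is the Moore–Penrose pseudoinverse of `A`. -/
def IsMPInv {H W : Type*} [NormedAddCommGroup H] [InnerProductSpace ℂ H]
    [FiniteDimensional ℂ H] [NormedAddCommGroup W] [InnerProductSpace ℂ W]
    [FiniteDimensional ℂ W] (A : H →ₗ[ℂ] W) (B : W →ₗ[ℂ] H) : Prop :=
  A ∘ₗ B ∘ₗ A = A ∧ B ∘ₗ A ∘ₗ B = B ∧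
    adjoint (A ∘ₗ B) = A ∘ₗ B ∧ adjoint (B ∘ₗ A) = B ∘ₗ A

/-- The positive witness size satisfies `‖P_{T ∩ K} w₀‖² = 1/w₊`. -/
theorem stmt15 {H W : Type*}
    [NormedAddCommGroup H] [InnerProductSpace ℂ H] [FiniteDimensional ℂ H]
    [NormedAddCommGroup W] [InnerProductSpace ℂ W] [FiniteDimensional ℂ W]
    (A : H →ₗ[ℂ] W) (τ : W) (hτ : τ ≠ 0)
    (Ainv : W →ₗ[ℂ] H) (hAinv : IsMPInv A Ainv)
    (w₀ : H) (hw₀ : w₀ = Ainv τ) (hw₀n : ‖w₀‖ = 1)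
    (K : Submodule ℂ H) (hK : ∃ h ∈ K, A h = τ)
    (T : Submodule ℂ H) (hT : T = ker A ⊔ Submodule.span ℂ {w₀})
    (wpos : ℝ)
    (hwpos : wpos = sInf {r : ℝ | ∃ h ∈ K, A h = τ ∧ r = ‖h‖ ^ 2}) :
    ‖projL (T ⊓ K) w₀‖ ^ 2 = 1 / wpos := by
  obtain ⟨hABA, hBAB, hadjAB, hadjBA⟩ := hAinv
  obtain ⟨h₀, hh₀K, hAh₀⟩ := hK
  -- A w₀ = τ
  have hAw₀ : A w₀ = τ := by
    have := congrArg (fun f => f h₀) hABA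
    simp only [LinearMap.comp_apply] at this
    rw [hw₀, ← hAh₀]
    simpa [hAh₀] using this
  -- w₀ is orthogonal to ker A
  have hperp : ∀ u ∈ ker A, ⟪w₀, u⟫_ℂ = 0 := by
    intro u hu
    have hfix : Ainv (A w₀) = w₀ := by
      have := congrArg (fun f => f τ) hBAB
      simp only [LinearMap.comp_apply] at this
      rw [hAw₀, hw₀]
    calc ⟪w₀, u⟫_ℂ = ⟪(Ainv ∘ₗ A) w₀, u⟫_ℂ := by
          simp [LinearMap.comp_apply, hfix]
      _ = ⟪adjoint (Ainv ∘ₗ A) w₀, u⟫_ℂ := by rw [hadjBA]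
      _ = ⟪w₀, (Ainv ∘ₗ A) u⟫_ℂ := adjoint_inner_left _ _ _
      _ = 0 := by
          have : A u = 0 := hu
          simp [LinearMap.comp_apply, this]
  -- the minimum-norm witness in K
  set N : Submodule ℂ H := ker A ⊓ K with hN
  set hs : H := h₀ - (Submodule.orthogonalProjectionOnto N h₀ : H) with hhs
  have hprojN_memN : ((Submodule.orthogonalProjectionOnto N h₀ : H)) ∈ N := (Submodule.orthogonalProjectionOnto N h₀).2
  have hsK : hs ∈ K := K.sub_mem hh₀K hprojN_memN.2
  have hAs : A hs = τ := by
    have h0 : A ((Submodule.orthogonalProjectionOnto N h₀ : H)) = 0 := hprojN_memN.1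
    simp [hhs, map_sub, h0, hAh₀, -Submodule.coe_orthogonalProjectionOnto_apply]
  have hs_orth : ∀ u ∈ N, ⟪hs, u⟫_ℂ = 0 := by
    have hmem : hs ∈ Nᗮ := Submodule.sub_starProjection_mem_orthogonal (K := N) h₀
    intro u hu
    exact (Submodule.mem_orthogonal' N hs).1 hmem u hu
  have hs_ne : hs ≠ 0 := by
    intro h
    exact hτ (by rw [← hAs, h, map_zero])
  have hs_norm_pos : (0:ℝ) < ‖hs‖ := norm_pos_iff.2 hs_ne
  -- wpos = ‖hs‖ ^ 2
  have hwp : wpos = ‖hs‖ ^ 2 := by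
    rw [hwpos]
    refine IsLeast.csInf_eq ⟨⟨hs, hsK, hAs, rfl⟩, ?_⟩
    rintro r ⟨h, hhK, hAh, rfl⟩
    have hd : h - hs ∈ N := ⟨by simp [LinearMap.mem_ker, map_sub, hAh, hAs], K.sub_mem hhK hsK⟩
    have := norm_add_sq_eq_norm_sq_add_norm_sq_of_inner_eq_zero hs (h - hs) (hs_orth _ hd)
    have h2 : ‖h‖ ^ 2 = ‖hs‖ ^ 2 + ‖h - hs‖ ^ 2 := by
      have hh : hs + (h - hs) = h := by abel
      rw [hh] at this
      rw [pow_two, pow_two, pow_two]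
      linarith
    nlinarith [sq_nonneg ‖h - hs‖, h2]
  -- hs ∈ T
  have hsT : hs ∈ T := by
    rw [hT]
    refine Submodule.mem_sup.2 ⟨hs - w₀, ?_, w₀, Submodule.mem_span_singleton_self w₀, by abel⟩
    simp [LinearMap.mem_ker, map_sub, hAs, hAw₀]
  -- the candidate projection
  set c : ℂ := ((‖hs‖ : ℂ) ^ 2)⁻¹ with hc
  set v : H := c • hs with hv
  have hvmem : v ∈ T ⊓ K := ⟨T.smul_mem c hsT, K.smul_mem c hsK⟩
  have hw₀w₀ : ⟪w₀, w₀⟫_ℂ = 1 := by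
    rw [inner_self_eq_norm_sq_to_K, hw₀n]; norm_num
  have hproj : ((Submodule.orthogonalProjectionOnto (T ⊓ K) w₀ : H)) = v := by
    refine Submodule.eq_starProjection_of_mem_of_inner_eq_zero hvmem ?_
    rintro x ⟨hxT, hxK⟩
    rw [hT] at hxT
    obtain ⟨y, hy, z, hz, hyz⟩ := Submodule.mem_sup.1 hxT
    obtain ⟨a, rfl⟩ := Submodule.mem_span_singleton.1 hz
    -- ⟪w₀, x⟫ = a
    have h1 : ⟪w₀, x⟫_ℂ = a := by
      rw [← hyz, inner_add_right, hperp y hy, inner_smul_right, hw₀w₀]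
      ring
    -- ⟪hs, x⟫ = a * ‖hs‖²
    have hd : x - a • hs ∈ N := by
      refine ⟨?_, K.sub_mem hxK (K.smul_mem a hsK)⟩
      have hAx : A x = a • τ := by
        rw [← hyz, map_add, map_smul, hAw₀]
        have : A y = 0 := hy
        simp [this]
      simp [LinearMap.mem_ker, map_sub, map_smul, hAx, hAs]
    have h2 : ⟪hs, x⟫_ℂ = a * (‖hs‖ : ℂ) ^ 2 := by
      have := hs_orth _ hd
      rw [inner_sub_right, inner_smul_right, sub_eq_zero] at this
      rw [this, inner_self_eq_norm_sq_to_K]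
      norm_num [RCLike.ofReal_alg]
    have hcs : (starRingEnd ℂ) c = c := by
      rw [hc]
      simp [← Complex.ofReal_pow]
    rw [inner_sub_left, inner_smul_left, h1, h2, hcs, hc]
    have hne : ((‖hs‖ : ℂ) ^ 2) ≠ 0 := by
      simp [pow_eq_zero_iff, hs_ne]
    field_simp
    rw [div_self (by exact_mod_cast hs_norm_pos.ne'), sub_self, mul_zero]
  -- conclude
  have hval : projL (T ⊓ K) w₀ = v := by
    simp only [projL, LinearMap.comp_apply]
    exact hproj
  rw [hval, hv, norm_smul, hwp, hc]
  have h1 : ‖((‖hs‖ : ℂ) ^ 2)⁻¹‖ = (‖hs‖ ^ 2)⁻¹ := by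
    rw [norm_inv, norm_pow, Complex.norm_real, Real.norm_of_nonneg (norm_nonneg hs)]
  rw [h1]
  field_simp
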